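/- Let k ≥ 2 and let v be an integer with 0 ≤ v ≤ k-1. Suppose nonnegative integers s_1, ..., s_n each satisfy 0 ≤ s_γ ≤ k(k-1). If the s_γ are of the form s_γ = (α_γ - 1)·k + (k - β_γ) for integers 1 ≤ α_γ ≤ k-1, 0 ≤ β_γ ≤ k-1 (or s_γ = 0), and q_n, ..., q_1 are defined by the carry recursion q_{n+1} = v and q_γ = α_γ if β_γ ≤ q_{γ+1}, q_γ = α_γ - 1 if β_γ > q_{γ+1} (and q_γ = 0 when s_γ = 0), then v + Σ_{γ=1}^n s_γ·k^{n-γ} ≥ u·k^n if and only if q_1 ≥ u. -/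

import Mathlib

/-- Base-`k` digit/carry argument: column values `s_γ` (for `γ = 1,...,n`), each either `0`
or of the form `(α_γ - 1)·k + (k - β_γ)` with `1 ≤ α_γ ≤ k-1` and `0 ≤ β_γ ≤ k-1`, with `v`
extra units in the least significant column, sum to at least `u·k^n` iff the carry `q_1`
produced by the carry recursion is at least `u`. -/
theorem base_k_carry (k n u v : ℕ) (hk : 2 ≤ k) (hv : v ≤ k - 1)
    (s α β : ℕ → ℕ)
    (hs : ∀ γ, 1 ≤ γ → γ ≤ n →
      s γ = 0 ∨ (1 ≤ α γ ∧ α γ ≤ k - 1 ∧ β γ ≤ k - 1 ∧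
        s γ = (α γ - 1) * k + (k - β γ)))
    (q : ℕ → ℕ) (hqtop : q (n + 1) = v)
    (hq : ∀ γ, 1 ≤ γ → γ ≤ n →
      q γ = if s γ = 0 then 0 else if β γ ≤ q (γ + 1) then α γ else α γ - 1) :
    (u * k ^ n ≤ v + ∑ γ ∈ Finset.Icc 1 n, s γ * k ^ (n - γ)) ↔ u ≤ q 1 := by
  have key : ∀ m γ, γ + m = n + 1 → 1 ≤ γ →
      q γ ≤ k - 1 ∧
      q γ * k ^ (n + 1 - γ) ≤ v + ∑ δ ∈ Finset.Icc γ n, s δ * k ^ (n - δ) ∧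
      v + ∑ δ ∈ Finset.Icc γ n, s δ * k ^ (n - δ) < (q γ + 1) * k ^ (n + 1 - γ) := by
    intro m
    induction m with
    | zero =>
      intro γ hγ h1
      have : γ = n + 1 := by omega
      subst this
      rw [Finset.Icc_eq_empty (by omega)]
      simp [hqtop]
      omega
    | succ m ih =>
      intro γ hγ h1
      have hγn : γ ≤ n := by omega
      obtain ⟨hq'k, hlo, hhi⟩ := ih (γ + 1) (by omega) (by omega)
      set q' := q (γ + 1) with hq'
      set S := ∑ δ ∈ Finset.Icc (γ + 1) n, s δ * k ^ (n - δ) with hS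
      have hsum : ∑ δ ∈ Finset.Icc γ n, s δ * k ^ (n - δ)
          = s γ * k ^ (n - γ) + S := by
        rw [hS, show Finset.Icc (γ + 1) n = Finset.Ioc γ n from Finset.Icc_add_one_left_eq_Ioc γ n,
          ← Finset.Ioc_insert_left hγn, Finset.sum_insert (Finset.left_notMem_Ioc)]
      set K := k ^ (n - γ) with hK
      have hKpos : 0 < K := Nat.pow_pos (by omega)
      have hexp : k ^ (n + 1 - γ) = k * K := by
        rw [hK, show n + 1 - γ = (n - γ) + 1 by omega, pow_succ, mul_comm]
      have hexp' : k ^ (n + 1 - (γ + 1)) = K := by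
        rw [hK]; congr 1; omega
      rw [hexp'] at hlo hhi
      rw [hsum, hexp]
      rcases hs γ h1 hγn with h0 | ⟨ha1, ha2, hb, hsg⟩
      · have hqγ : q γ = 0 := by rw [hq γ h1 hγn, if_pos h0]
        refine ⟨by omega, by simp [hqγ], ?_⟩
        rw [hqγ, h0]
        have : (q' + 1) * K ≤ k * K := Nat.mul_le_mul_right _ (by omega)
        simpa using lt_of_lt_of_le hhi this
      · obtain ⟨a', ha'⟩ : ∃ a', α γ = a' + 1 := ⟨α γ - 1, by omega⟩
        rw [ha'] at ha2 hsg
        set b := β γ with hbdef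
        have hsg' : s γ = a' * k + (k - b) := by
          rw [hsg]; norm_num
        have hs0 : s γ ≠ 0 := by
          rw [hsg']
          intro hcontra
          have h2 := Nat.eq_zero_of_add_eq_zero_left hcontra
          omega
        have hak : (a' + 1) * k = s γ + b := by
          rw [hsg', add_one_mul]; omega
        by_cases hbq : b ≤ q'
        · have hqγ : q γ = a' + 1 := by rw [hq γ h1 hγn, if_neg hs0, if_pos hbq]; exact ha'
          refine ⟨by omega, ?_, ?_⟩
          · calc (q γ) * (k * K) = ((a' + 1) * k) * K := by rw [hqγ]; ring
              _ = s γ * K + b * K := by rw [hak, add_mul]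
              _ ≤ s γ * K + q' * K :=
                  Nat.add_le_add_left (Nat.mul_le_mul_right _ hbq) _
              _ ≤ s γ * K + (v + S) := Nat.add_le_add_left hlo _
              _ = v + (s γ * K + S) := by ring
          · calc v + (s γ * K + S) < s γ * K + (q' + 1) * K := by omega
              _ = (s γ + q' + 1) * K := by ring
              _ ≤ ((q γ + 1) * k) * K := by
                  refine Nat.mul_le_mul_right _ ?_
                  rw [hqγ, show (a' + 1 + 1) * k = (a' + 1) * k + k by ring, hak]
                  omega
              _ = (q γ + 1) * (k * K) := by ring
        · have hqγ : q γ = a' := by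
            rw [hq γ h1 hγn, if_neg hs0, if_neg hbq, ha']; omega
          refine ⟨by omega, ?_, ?_⟩
          · calc (q γ) * (k * K) = (a' * k) * K := by rw [hqγ]; ring
              _ ≤ s γ * K := Nat.mul_le_mul_right _ (by rw [hsg']; omega)
              _ ≤ v + (s γ * K + S) := by omega
          · calc v + (s γ * K + S) < s γ * K + (q' + 1) * K := by omega
              _ ≤ s γ * K + b * K := by
                  have : (q' + 1) * K ≤ b * K := Nat.mul_le_mul_right _ (by omega)
                  omega
              _ = (s γ + b) * K := by ring
              _ = ((a' + 1) * k) * K := by rw [hak]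
              _ = (q γ + 1) * (k * K) := by rw [hqγ]; ring
  obtain ⟨-, hlo, hhi⟩ := key n 1 (by omega) le_rfl
  simp only [show n + 1 - 1 = n by omega] at hlo hhi
  constructor
  · intro h
    have : u * k ^ n < (q 1 + 1) * k ^ n := lt_of_le_of_lt h hhi
    have := Nat.lt_of_mul_lt_mul_right this
    omega
  · intro h
    calc u * k ^ n ≤ q 1 * k ^ n := Nat.mul_le_mul_right _ h
      _ ≤ v + ∑ γ ∈ Finset.Icc 1 n, s γ * k ^ (n - γ) := hlo
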